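/- For all integers n ≥ r ≥ 0, the following identity holds in ℚ[q]: J_n^{(r)}(q) = (n−r)! · ∑_u [r]_q^{u_1} q^{∑_{i≥1} C(u_i,2)} ∏_{i≥1} [u_i]_q^{u_{i+1}}/u_i!, where the sum is over all sequences u = (u_1, u_2, …) of nonnegative integers with finite support satisfying ∑_{i≥1} u_i = n−r, with the conventions [0]_q^0 = 1 and 0! = 1 (so all but finitely many factors of the product equal 1). -/

import Mathlib

noncomputable section

/-- `[m]_q = 1 + q + ⋯ + q^{m-1}` as a polynomial in `q` (so `[0]_q = 0`). -/
def qNat (m : ℕ) : Polynomial ℚ := ∑ i ∈ Finset.range m, Polynomial.X ^ i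

/-- The polynomials `J_n^{(r)}(q)`: `J_n^{(0)} = δ_{n,0}`, `J_r^{(r)} = 1` for
`r ≥ 1`, and for `n > r ≥ 1` the recurrence
`J_n^{(r)} = ∑_{j=1}^{n−r} [r]_q^j q^{C(j,2)} C(n−r,j) J_{n−r}^{(j)}`.
(For `n < r` we set the unconstrained value `J_n^{(r)} = 0`.) -/
def J (n r : ℕ) : Polynomial ℚ :=
  if hr : r = 0 then (if n = 0 then 1 else 0)
  else if hn : n ≤ r then (if n = r then 1 else 0)
  else
    ∑ j ∈ Finset.Icc 1 (n - r),
      qNat r ^ j * Polynomial.X ^ j.choose 2 * ((n - r).choose j : Polynomial ℚ) * J (n - r) j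
termination_by n
decreasing_by omega


open Polynomial Finset

def termF (r : ℕ) (v : ℕ →₀ ℕ) (M : ℕ) : Polynomial ℚ :=
  qNat r ^ v 0 * X ^ (∑ i ∈ range M, (v i).choose 2) *
    ∏ i ∈ range M, (qNat (v i) ^ v (i + 1) * C (((v i).factorial : ℚ)⁻¹))

def GF (v : ℕ →₀ ℕ) : Prop := ∀ i, v i = 0 → v (i + 1) = 0

open Classical in
def T (m : ℕ) : Finset (ℕ →₀ ℕ) :=
  ((Finset.range m).finsuppAntidiag m).filter (fun v => GF v)

lemma qNat_zero : qNat 0 = 0 := by simp [qNat]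

lemma mem_T {m : ℕ} {v : ℕ →₀ ℕ} :
    v ∈ T m ↔ (v.sum fun _ x => x) = m ∧ v.support ⊆ range m ∧ GF v := by
  classical
  rw [T, Finset.mem_filter, Finset.mem_finsuppAntidiag', and_assoc, and_comm (a := v.support ⊆ range m)]

/-- gap-free: nonzero entries propagate left -/
lemma GF.left {v : ℕ →₀ ℕ} (h : GF v) {t : ℕ} (ht : v t ≠ 0) : ∀ i ≤ t, v i ≠ 0 := by
  induction t with
  | zero => intro i hi; interval_cases i; exact ht
  | succ t ih =>
    intro i hi
    have h0 : v t ≠ 0 := fun h0 => ht (h t h0)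
    rcases Nat.lt_succ_iff_lt_or_eq.1 (Nat.lt_succ_of_le hi) with h' | h'
    · exact ih h0 i (by omega)
    · subst h'; exact ht

lemma GF.support_subset {v : ℕ →₀ ℕ} (h : GF v) {m : ℕ} (hs : (v.sum fun _ x => x) = m) :
    v.support ⊆ range m := by
  intro t ht
  rw [Finset.mem_range]
  by_contra hlt
  push_neg at hlt
  have hsub : range (t + 1) ⊆ v.support := fun i hi =>
    Finsupp.mem_support_iff.2 (h.left (Finsupp.mem_support_iff.1 ht) i (Nat.lt_succ_iff.1 (mem_range.1 hi)))
  have : t + 1 ≤ m := by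
    calc t + 1 = ∑ i ∈ range (t + 1), 1 := by simp
    _ ≤ ∑ i ∈ range (t + 1), v i := Finset.sum_le_sum (fun i hi =>
        Nat.one_le_iff_ne_zero.2 (Finsupp.mem_support_iff.1 (hsub hi)))
    _ ≤ ∑ i ∈ v.support, v i := Finset.sum_le_sum_of_subset hsub
    _ = m := hs
  omega

lemma GF.zero_of_head {v : ℕ →₀ ℕ} (h : GF v) (h0 : v 0 = 0) : v = 0 := by
  ext i
  induction i with
  | zero => exact h0
  | succ i ih => exact h i ih

/-- termF vanishes on non-gap-free v (with gap visible in range M) -/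
lemma termF_eq_zero {r : ℕ} {v : ℕ →₀ ℕ} {M : ℕ} (hv : ¬ GF v)
    (hs : v.support ⊆ range M) : termF r v M = 0 := by
  simp only [GF, not_forall] at hv
  obtain ⟨i, h0, h1⟩ := hv
  have hiM : i ∈ range M := by
    have : i + 1 ∈ v.support := Finsupp.mem_support_iff.2 h1
    have := mem_range.1 (hs this)
    exact mem_range.2 (by omega)
  have : (qNat (v i) ^ v (i + 1) * C (((v i).factorial : ℚ)⁻¹)) = 0 := by
    rw [h0, qNat_zero, zero_pow (by omega)] ; ring
  unfold termF
  rw [Finset.prod_eq_zero hiM this, mul_zero]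

/-- termF doesn't depend on the truncation bound, past the support -/
lemma termF_mono {r : ℕ} {v : ℕ →₀ ℕ} {M M' : ℕ} (hs : v.support ⊆ range M) (h : M ≤ M') :
    termF r v M = termF r v M' := by
  have key : ∀ i, M ≤ i → v i = 0 := fun i hi => by
    by_contra hne
    exact absurd (mem_range.1 (hs (Finsupp.mem_support_iff.2 hne))) (by omega)
  unfold termF
  congr 1
  · congr 1
    rw [Finset.sum_subset (range_subset_range.2 h)]
    intro i _ hi
    rw [key i (by simpa using hi)]
    rfl
  · rw [Finset.prod_subset (range_subset_range.2 h)]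
    intro i _ hi
    rw [key i (by simpa using hi), key (i+1) (by have := mem_range.not.1 hi; omega), qNat_zero]
    simp

def tail (v : ℕ →₀ ℕ) : ℕ →₀ ℕ :=
  Finsupp.comapDomain Nat.succ v (Nat.succ_injective.injOn)

def consF (j : ℕ) (w : ℕ →₀ ℕ) : ℕ →₀ ℕ :=
  Finsupp.single 0 j + w.embDomain ⟨Nat.succ, Nat.succ_injective⟩

@[simp] lemma tail_apply (v : ℕ →₀ ℕ) (i : ℕ) : tail v i = v (i + 1) := rfl

@[simp] lemma consF_zero (j : ℕ) (w : ℕ →₀ ℕ) : consF j w 0 = j := by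
  have : (0 : ℕ) ∉ Set.range (⟨Nat.succ, Nat.succ_injective⟩ : ℕ ↪ ℕ) := by
    simp [Function.Embedding.coeFn_mk]
  simp [consF, Finsupp.embDomain_notin_range _ _ _ this]

@[simp] lemma consF_succ (j : ℕ) (w : ℕ →₀ ℕ) (i : ℕ) : consF j w (i + 1) = w i := by
  have : consF j w (i+1) = Finsupp.single 0 j (i+1) +
      w.embDomain ⟨Nat.succ, Nat.succ_injective⟩ (Nat.succ i) := rfl
  rw [this, Finsupp.single_apply]
  have h2 := Finsupp.embDomain_apply_self (⟨Nat.succ, Nat.succ_injective⟩ : ℕ ↪ ℕ) w i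
  simp only [Function.Embedding.coeFn_mk] at h2
  simp [h2]

lemma consF_tail (v : ℕ →₀ ℕ) : consF (v 0) (tail v) = v := by
  ext i
  cases i with
  | zero => simp
  | succ i => simp

lemma tail_consF (j : ℕ) (w : ℕ →₀ ℕ) : tail (consF j w) = w := by
  ext i; simp

lemma sum_consF (j : ℕ) (w : ℕ →₀ ℕ) :
    ((consF j w).sum fun _ x => x) = j + (w.sum fun _ x => x) := by
  rw [consF, Finsupp.sum_add_index' (fun _ => rfl) (fun _ _ _ => rfl),
    Finsupp.sum_single_index rfl, Finsupp.sum_embDomain]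

lemma GF_consF {j : ℕ} (hj : j ≠ 0) {w : ℕ →₀ ℕ} (hw : GF w) : GF (consF j w) := by
  intro i h0
  cases i with
  | zero => simp at h0; omega
  | succ i => simp only [consF_succ] at h0 ⊢; exact hw i h0

lemma GF_tail {v : ℕ →₀ ℕ} (hv : GF v) : GF (tail v) := fun i h0 => hv (i+1) h0

/-- membership transfer -/
lemma tail_mem_T {m : ℕ} {v : ℕ →₀ ℕ} (hv : v ∈ T m) : tail v ∈ T (m - v 0) := by
  rw [mem_T] at hv ⊢
  obtain ⟨hsum, _, hgf⟩ := hv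
  have hgt : GF (tail v) := GF_tail hgf
  have h0 : v 0 ≤ m := by
    rcases Nat.eq_zero_or_pos (v 0) with h | h
    · omega
    · calc v 0 ≤ ∑ i ∈ v.support, v i :=
          Finset.single_le_sum (fun i _ => Nat.zero_le _) (Finsupp.mem_support_iff.2 (by omega))
      _ = m := hsum
  have hsum' : ((tail v).sum fun _ x => x) = m - v 0 := by
    have := sum_consF (v 0) (tail v)
    rw [consF_tail] at this
    omega
  exact ⟨hsum', hgt.support_subset hsum', hgt⟩

lemma consF_mem_T {m j : ℕ} (hj1 : 1 ≤ j) (hjm : j ≤ m) {w : ℕ →₀ ℕ} (hw : w ∈ T (m - j)) :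
    consF j w ∈ T m := by
  rw [mem_T] at hw ⊢
  obtain ⟨hsum, _, hgf⟩ := hw
  have hg : GF (consF j w) := GF_consF (by omega) hgf
  have hs : ((consF j w).sum fun _ x => x) = m := by rw [sum_consF, hsum]; omega
  exact ⟨hs, hg.support_subset hs, hg⟩

lemma v0_pos_of_mem_T {m : ℕ} (hm : 1 ≤ m) {v : ℕ →₀ ℕ} (hv : v ∈ T m) : 1 ≤ v 0 := by
  rw [mem_T] at hv
  by_contra h
  have h0 : v 0 = 0 := by omega
  have := hv.2.2.zero_of_head h0
  rw [this] at hv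
  simp [Finsupp.sum_zero_index] at hv
  omega

lemma T_zero : T 0 = {0} := by
  ext v
  rw [mem_T]
  simp only [Finset.mem_singleton]
  constructor
  · rintro ⟨h, hs, -⟩
    ext i
    simp only [Finsupp.coe_zero, Pi.zero_apply]
    by_contra hne
    exact absurd (hs (Finsupp.mem_support_iff.2 hne)) (by simp)
  · rintro rfl
    exact ⟨by simp, by simp, fun i _ => rfl⟩

/-- the key factorization -/
lemma termF_consF {r j m : ℕ} (hm : 1 ≤ m) (w : ℕ →₀ ℕ) :
    termF r (consF j w) m =
      qNat r ^ j * X ^ j.choose 2 * C ((j.factorial : ℚ)⁻¹) * termF j w (m - 1) := by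
  obtain ⟨M, rfl⟩ : ∃ M, m = M + 1 := ⟨m - 1, by omega⟩
  unfold termF
  rw [Finset.sum_range_succ' (fun i => ((consF j w) i).choose 2) M,
    Finset.prod_range_succ' (fun i => qNat ((consF j w) i) ^ ((consF j w) (i+1)) * C ((((consF j w) i).factorial : ℚ)⁻¹)) M]
  simp only [consF_succ, consF_zero, Nat.add_sub_cancel, pow_add]
  ring

lemma v0_le_of_mem_T {m : ℕ} {v : ℕ →₀ ℕ} (hv : v ∈ T m) : v 0 ≤ m := by
  rw [mem_T] at hv
  rcases Nat.eq_zero_or_pos (v 0) with h | h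
  · omega
  · calc v 0 ≤ ∑ i ∈ v.support, v i :=
        Finset.single_le_sum (fun i _ => Nat.zero_le _) (Finsupp.mem_support_iff.2 (by omega))
    _ = m := hv.1

lemma factorial_choose_poly {j m : ℕ} (hj : j ≤ m) :
    ((m.choose j : Polynomial ℚ)) * ((m - j).factorial : Polynomial ℚ) =
      (m.factorial : Polynomial ℚ) * C ((j.factorial : ℚ)⁻¹) := by
  have h := Nat.choose_mul_factorial_mul_factorial hj
  have hfac : (j.factorial : ℚ) ≠ 0 := Nat.cast_ne_zero.2 j.factorial_ne_zero
  rw [← map_natCast (C : ℚ →+* Polynomial ℚ) (m.choose j),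
      ← map_natCast (C : ℚ →+* Polynomial ℚ) ((m - j).factorial),
      ← map_natCast (C : ℚ →+* Polynomial ℚ) (m.factorial), ← map_mul, ← map_mul]
  congr 1
  field_simp
  rw [← h]
  push_cast
  ring

lemma main_lemma : ∀ n r : ℕ, 1 ≤ r → r ≤ n →
    J n r = ((n - r).factorial : Polynomial ℚ) * ∑ v ∈ T (n - r), termF r v (n - r) := by
  intro n
  induction n using Nat.strong_induction_on with
  | _ n IH =>
    intro r hr1 hrn
    rcases eq_or_lt_of_le hrn with rfl | hlt
    · -- n = r
      rw [J]
      rw [dif_neg (by omega), dif_pos le_rfl, if_pos rfl]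
      simp [T_zero, termF]
    · -- n > r
      set m := n - r with hm
      have hm1 : 1 ≤ m := by omega
      rw [J, dif_neg (by omega), dif_neg (by omega)]
      -- RHS: reindex via sigma
      have hbij : ∑ v ∈ T m, termF r v m =
          ∑ p ∈ (Finset.Icc 1 m).sigma (fun j => T (m - j)), termF r (consF p.1 p.2) m := by
        refine Finset.sum_nbij' (fun v => ⟨v 0, tail v⟩) (fun p => consF p.1 p.2) ?_ ?_ ?_ ?_ ?_
        · intro v hv
          rw [Finset.mem_sigma]
          exact ⟨Finset.mem_Icc.2 ⟨v0_pos_of_mem_T hm1 hv, v0_le_of_mem_T hv⟩, tail_mem_T hv⟩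
        · rintro ⟨j, w⟩ hp
          rw [Finset.mem_sigma, Finset.mem_Icc] at hp
          exact consF_mem_T hp.1.1 hp.1.2 hp.2
        · intro v _; exact consF_tail v
        · rintro ⟨j, w⟩ _
          simp only [consF_zero, tail_consF]
        · intro v _; rw [consF_tail]
      rw [hbij, Finset.sum_sigma]
      simp only [Finset.mul_sum]
      refine Finset.sum_congr rfl fun j hj => ?_
      rw [Finset.mem_Icc] at hj
      rw [IH m (by omega) j hj.1 hj.2]
      simp only [Finset.mul_sum]
      refine Finset.sum_congr rfl fun w hw => ?_
      have hsup : w.support ⊆ range (m - j) := (mem_T.1 hw).2.1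
      rw [termF_consF hm1 w, termF_mono (r := j) hsup (show m - j ≤ m - 1 by omega)]
      have key : qNat r ^ j * X ^ j.choose 2 * ((m.choose j : Polynomial ℚ)) *
            (((m - j).factorial : Polynomial ℚ) * termF j w (m - 1)) =
          ((m.choose j : Polynomial ℚ) * ((m - j).factorial : Polynomial ℚ)) *
            (qNat r ^ j * X ^ j.choose 2 * termF j w (m - 1)) := by ring
      rw [key, factorial_choose_poly hj.2]
      ring

lemma finsum_apply_finsupp (v : ℕ →₀ ℕ) : (∑ᶠ i, v i) = v.sum fun _ x => x := by
  rw [Finsupp.sum]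
  exact finsum_eq_sum_of_support_subset _ (by simp [Function.support_subset_iff])

lemma termO_eq_termF (r : ℕ) (v : ℕ →₀ ℕ) {M : ℕ} (hs : v.support ⊆ Finset.range M) :
    qNat r ^ v 0 * X ^ (∑ᶠ i, (v i).choose 2) *
      ∏ᶠ i, (qNat (v i) ^ v (i + 1) * C (((v i).factorial : ℚ)⁻¹)) = termF r v M := by
  have hzero : ∀ i, i ∉ Finset.range M → v i = 0 := by
    intro i hi
    by_contra h
    exact hi (hs (Finsupp.mem_support_iff.2 h))
  have h1 : (∑ᶠ i, (v i).choose 2) = ∑ i ∈ range M, (v i).choose 2 := by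
    apply finsum_eq_sum_of_support_subset
    intro i hi
    simp only [Function.mem_support] at hi
    by_contra h
    rw [hzero i h] at hi
    exact hi rfl
  have h2 : (∏ᶠ i, (qNat (v i) ^ v (i + 1) * C (((v i).factorial : ℚ)⁻¹))) =
      ∏ i ∈ range M, (qNat (v i) ^ v (i + 1) * C (((v i).factorial : ℚ)⁻¹)) := by
    apply finprod_eq_prod_of_mulSupport_subset
    intro i hi
    simp only [Function.mem_mulSupport] at hi
    by_contra h
    have e0 : v i = 0 := hzero i h
    have e1 : v (i + 1) = 0 := hzero (i + 1) (by
      intro hmem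
      exact h (Finset.mem_range.2 (by have := Finset.mem_range.1 hmem; omega)))
    rw [e0, e1] at hi
    simp at hi
  rw [h1, h2]; rfl

lemma finsum_to_T (r m : ℕ) :
    (∑ᶠ v ∈ {v : ℕ →₀ ℕ | (∑ᶠ i, v i) = m},
      qNat r ^ v 0 * X ^ (∑ᶠ i, (v i).choose 2) *
        ∏ᶠ i, (qNat (v i) ^ v (i + 1) * C (((v i).factorial : ℚ)⁻¹))) =
    ∑ v ∈ T m, termF r v m := by
  rw [finsum_mem_eq_sum_of_inter_support_eq _
    (t := T m) ?_]
  · exact Finset.sum_congr rfl fun v hv => termO_eq_termF r v (mem_T.1 hv).2.1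
  · ext v
    simp only [Set.mem_inter_iff, Set.mem_setOf_eq, Function.mem_support, Finset.coe_sort_coe,
      Finset.mem_coe]
    constructor
    · rintro ⟨hsum, hne⟩
      rw [finsum_apply_finsupp] at hsum
      obtain ⟨M, hM⟩ := Finset.exists_nat_subset_range v.support
      have hgf : GF v := by
        by_contra hgfn
        exact hne (by rw [termO_eq_termF r v hM]; exact termF_eq_zero hgfn hM)
      exact ⟨mem_T.2 ⟨hsum, hgf.support_subset hsum, hgf⟩, hne⟩
    · rintro ⟨hmem, hne⟩
      rw [finsum_apply_finsupp]
      exact ⟨(mem_T.1 hmem).1, hne⟩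


open Polynomial in
/-- for all `n ≥ r ≥ 0`,
`J_n^{(r)} = (n−r)! ∑_u [r]_q^{u_1} q^{∑_{i≥1} C(u_i,2)} ∏_{i≥1} [u_i]_q^{u_{i+1}}/u_i!`,
the sum being over all finitely supported sequences `u = (u_1, u_2, …)` of
nonnegative integers with `∑_{i≥1} u_i = n − r` (the sequence `u` is encoded as
`v : ℕ →₀ ℕ` with `v i = u_{i+1}`).  All but finitely many summands, and all but
finitely many factors of each product, are trivial (`[0]_q^0 = 1`, `0! = 1`). -/
theorem J_explicit_formula_finsupp (n r : ℕ) (hrn : r ≤ n) :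
    J n r =
      ((n - r).factorial : Polynomial ℚ) *
        ∑ᶠ v ∈ {v : ℕ →₀ ℕ | (∑ᶠ i, v i) = n - r},
          qNat r ^ v 0 * Polynomial.X ^ (∑ᶠ i, (v i).choose 2) *
            ∏ᶠ i, (qNat (v i) ^ v (i + 1) * Polynomial.C (((v i).factorial : ℚ)⁻¹)) := by
  rw [finsum_to_T]
  rcases Nat.eq_zero_or_pos r with rfl | hr
  · rcases Nat.eq_zero_or_pos n with rfl | hn
    · rw [J, dif_pos rfl, if_pos rfl]
      simp [T_zero, termF]
    · rw [J, dif_pos rfl, if_neg (by omega)]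
      have : ∀ v ∈ T (n - 0), termF 0 v (n - 0) = 0 := by
        intro v hv
        have h0 : 1 ≤ v 0 := v0_pos_of_mem_T (by omega) hv
        unfold termF
        rw [qNat_zero, zero_pow (by omega)]
        ring
      rw [Finset.sum_congr rfl this]
      simp
  · exact main_lemma n r hr hrn

end
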